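/- arXiv:2408.17109 — 2 statements merged into one kernel-verified Lean document; each statement's English description precedes it below -/
import Mathlib

section
/- Let μ and ν be probability measures on X = C_0([0,T]; ℝ^d) under each of which every coordinate X_t of the canonical process is integrable and the canonical process is a martingale with respect to the right-continuous natural filtration. Then for every bicausal coupling π of (μ, ν), the ℝ^{2d}-valued process (X_t, Y_t)_{t ∈ [0,T]} formed by the two canonical coordinate processes is a martingale under π with respect to the product filtration (F_t ⊗ G_t)_{t ∈ [0,T]}. -/
open MeasureTheory Filter Set

noncomputable section

/-- The path space `C_0([0,T]; ℝ^d)`: functions `ℝ → ℝ^d` that are continuous on `[0,T]`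
and vanish at `0`. -/
def ContPath (T : ℝ) (d : ℕ) : Type :=
  {ω : ℝ → Fin d → ℝ // ContinuousOn ω (Set.Icc 0 T) ∧ ω 0 = 0}

/-- The σ-algebra `σ(ω_r : r ∈ [0,T], r ≤ s)` generated by the evaluations up to time `s`. -/
def evalSigma (T : ℝ) (d : ℕ) (s : ℝ) : MeasurableSpace (ContPath T d) :=
  ⨆ r : {r : ℝ // 0 ≤ r ∧ r ≤ T ∧ r ≤ s},
    MeasurableSpace.comap (fun ω : ContPath T d => ω.1 r.1) inferInstance

/-- The ambient σ-algebra on the path space is `σ(ω_r : r ∈ [0,T])`. -/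
instance instMSContPath (T : ℝ) (d : ℕ) : MeasurableSpace (ContPath T d) := evalSigma T d T

/-- The right-continuous natural filtration `F_t = ⋂_{s > t} σ(ω_r : r ≤ s)`
(with `F_T = σ(ω_r : r ≤ T)`). -/
def FilC (T : ℝ) (d : ℕ) (t : ℝ) : MeasurableSpace (ContPath T d) :=
  if t < T then ⨅ s : {s : ℝ // t < s ∧ s ≤ T}, evalSigma T d s.1 else evalSigma T d T

/-- Conditional independence of `m₁` and `m₂` given `m'` under `π`, expressed through
conditional expectations of indicators. -/
def CondIndepOn {Ω : Type*} [MeasurableSpace Ω] (π : Measure Ω)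
    (m' m₁ m₂ : MeasurableSpace Ω) : Prop :=
  ∀ A B : Set Ω, MeasurableSet[m₁] A → MeasurableSet[m₂] B →
    (π[(A ∩ B).indicator (fun _ => (1 : ℝ)) | m']) =ᵐ[π]
      (π[A.indicator (fun _ => (1 : ℝ)) | m']) * (π[B.indicator (fun _ => (1 : ℝ)) | m'])

/-- `π` is a coupling with first marginal `μ` which is causal to its second marginal:
for every `t ∈ [0,T]`, `σ(Y_s : s ≤ t)` is conditionally independent of
`σ(X_s : s ≤ T)` given `F_t`. -/
def IsCausalStarC (T : ℝ) (d : ℕ) (μ : Measure (ContPath T d))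
    (π : Measure (ContPath T d × ContPath T d)) : Prop :=
  π.map Prod.fst = μ ∧
  ∀ t ∈ Set.Icc (0 : ℝ) T,
    CondIndepOn π ((FilC T d t).comap Prod.fst)
      ((FilC T d t).comap Prod.snd) ((evalSigma T d T).comap Prod.fst)

/-- `π` is a causal coupling of `(μ, ν)`. -/
def IsCausalCouplingC (T : ℝ) (d : ℕ) (μ ν : Measure (ContPath T d))
    (π : Measure (ContPath T d × ContPath T d)) : Prop :=
  π.map Prod.snd = ν ∧ IsCausalStarC T d μ π

/-- `π` is a bicausal coupling of `(μ, ν)`: both `π` and its swap are causal. -/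
def IsBicausalCouplingC (T : ℝ) (d : ℕ) (μ ν : Measure (ContPath T d))
    (π : Measure (ContPath T d × ContPath T d)) : Prop :=
  IsCausalCouplingC T d μ ν π ∧
  ∀ t ∈ Set.Icc (0 : ℝ) T,
    CondIndepOn π ((FilC T d t).comap Prod.snd)
      ((FilC T d t).comap Prod.fst) ((evalSigma T d T).comap Prod.snd)

/-- `μ` is a martingale measure on `C_0([0,T]; ℝ^d)`: every coordinate `X_t`, `t ∈ [0,T]`,
is integrable and the canonical process is a martingale with respect to the right-continuous
natural filtration. -/
def IsMartingaleMeasureC (T : ℝ) (d : ℕ) (μ : Measure (ContPath T d)) : Prop :=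
  (∀ t ∈ Set.Icc (0 : ℝ) T, Integrable (fun ω : ContPath T d => ω.1 t) μ) ∧
  ∀ s t : ℝ, 0 ≤ s → s ≤ t → t ≤ T →
    (μ[(fun ω : ContPath T d => ω.1 t) | FilC T d s]) =ᵐ[μ] (fun ω => ω.1 s)

end

noncomputable section


/-- Conditional expectation commutes with continuous linear maps. -/
lemma aux_condexp_clm {α E F : Type*} {m : MeasurableSpace α} {mα : MeasurableSpace α}
    [NormedAddCommGroup E] [NormedSpace ℝ E] [CompleteSpace E]
    [NormedAddCommGroup F] [NormedSpace ℝ F] [CompleteSpace F]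
    {μ : Measure α} [IsProbabilityMeasure μ]
    (hm : m ≤ mα) (L : E →L[ℝ] F) {f : α → E} (hf : Integrable f μ) :
    μ[(fun a => L (f a)) | m] =ᵐ[μ] fun a => L ((μ[f|m]) a) := by
  refine (ae_eq_condExp_of_forall_setIntegral_eq hm (L.integrable_comp hf)
    (fun s _ _ => (L.integrable_comp integrable_condExp).integrableOn)
    (fun s hs _ => ?_)
    ((L.continuous.comp_stronglyMeasurable stronglyMeasurable_condExp).aestronglyMeasurable)).symm
  rw [L.integral_comp_comm hf.integrableOn, L.integral_comp_comm integrable_condExp.integrableOn,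
    setIntegral_condExp hm hf hs]

/-- Conditional expectation onto a comap σ-algebra of a measure-preserving map. -/
lemma aux_condexp_comap {α β E : Type*} {m : MeasurableSpace β}
    {mα : MeasurableSpace α} {mβ : MeasurableSpace β}
    [NormedAddCommGroup E] [NormedSpace ℝ E] [CompleteSpace E]
    {π : Measure α} [IsProbabilityMeasure π] {φ : α → β} (hφ : Measurable φ)
    {μ : Measure β} [IsProbabilityMeasure μ] (hmap : π.map φ = μ)
    (hm : m ≤ mβ)
    {h : β → E} (hh : Integrable h μ) :
    π[(fun a => h (φ a)) | m.comap φ] =ᵐ[π] fun a => (μ[h|m]) (φ a) := by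
  have hcm : m.comap φ ≤ mα := (MeasurableSpace.comap_mono hm).trans hφ.comap_le
  have hint : Integrable (fun a => h (φ a)) π := by
    rw [← hmap] at hh
    exact (integrable_map_measure hh.1 hφ.aemeasurable).mp hh
  set k := μ[h|m] with hk
  have hintc : Integrable k μ := integrable_condExp
  have hintc' : Integrable (fun a => k (φ a)) π := by
    have h2 : AEStronglyMeasurable k (π.map φ) := by rw [hmap]; exact hintc.1
    refine (integrable_map_measure h2 hφ.aemeasurable).mp ?_
    rw [hmap]; exact hintc
  refine (ae_eq_condExp_of_forall_setIntegral_eq hcm hint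
    (fun s _ _ => hintc'.integrableOn) (fun s hsm _ => ?_)
    ((stronglyMeasurable_condExp.comp_measurable (comap_measurable φ)).aestronglyMeasurable)).symm
  obtain ⟨u, hu, rfl⟩ := hsm
  have hmu : MeasurableSet u := hm _ hu
  have h1 : AEStronglyMeasurable h (π.map φ) := by rw [hmap]; exact hh.1
  have h2 : AEStronglyMeasurable k (π.map φ) := by rw [hmap]; exact hintc.1
  calc ∫ a in φ ⁻¹' u, k (φ a) ∂π
      = ∫ b in u, k b ∂μ := by
        rw [← hmap]; exact (setIntegral_map hmu h2 hφ.aemeasurable).symm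
    _ = ∫ b in u, h b ∂μ := by rw [hk]; exact setIntegral_condExp hm hh hu
    _ = ∫ a in φ ⁻¹' u, h (φ a) ∂π := by
        rw [← hmap]; exact setIntegral_map hmu h1 hφ.aemeasurable

/-- Under conditional independence, conditioning an indicator of a `m₁`-set on `m₂`
is the same as conditioning on `m'`. -/
lemma aux_condexp_indicator_condIndep {α : Type*} {m' m₁ m₂ : MeasurableSpace α}
    {mα : MeasurableSpace α}
    {π : Measure α} [IsProbabilityMeasure π]
    (hm'2 : m' ≤ m₂) (hm2 : m₂ ≤ mα)
    (hci : CondIndepOn π m' m₁ m₂) {B : Set α} (hB : MeasurableSet[m₁] B)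
    (hB0 : MeasurableSet B) :
    π[B.indicator (fun _ => (1:ℝ)) | m₂] =ᵐ[π] π[B.indicator (fun _ => (1:ℝ)) | m'] := by
  have hm'0 : m' ≤ mα := hm'2.trans hm2
  have hiB_int : Integrable (B.indicator (fun _ => (1:ℝ))) π := (integrable_const 1).indicator hB0
  refine (ae_eq_condExp_of_forall_setIntegral_eq hm2 hiB_int
    (fun s _ _ => integrable_condExp.integrableOn) (fun C hC _ => ?_)
    ((stronglyMeasurable_condExp.mono hm'2).aestronglyMeasurable)).symm
  have hC0 : MeasurableSet C := hm2 _ hC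
  have hiC_int : Integrable (C.indicator (fun _ => (1:ℝ))) π := (integrable_const 1).indicator hC0
  have hprod_eq : (π[B.indicator (fun _ => (1:ℝ))|m']) * C.indicator (fun _ => (1:ℝ))
      = C.indicator (π[B.indicator (fun _ => (1:ℝ))|m']) := by
    funext x
    by_cases hx : x ∈ C <;> simp [Set.indicator_apply, hx]
  have hprod_int : Integrable ((π[B.indicator (fun _ => (1:ℝ))|m']) * C.indicator (fun _ => (1:ℝ))) π := by
    rw [hprod_eq]; exact integrable_condExp.indicator hC0
  have pull := condExp_mul_of_stronglyMeasurable_left (m := m') (μ := π)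
    (stronglyMeasurable_condExp (f := B.indicator (fun _ => (1:ℝ)))) hprod_int hiC_int
  calc ∫ x in C, (π[B.indicator (fun _ => (1:ℝ))|m']) x ∂π
      = ∫ x, ((π[B.indicator (fun _ => (1:ℝ))|m']) * C.indicator (fun _ => (1:ℝ))) x ∂π := by
        rw [hprod_eq, integral_indicator hC0]
    _ = ∫ x, (π[(π[B.indicator (fun _ => (1:ℝ))|m']) * C.indicator (fun _ => (1:ℝ))|m']) x ∂π :=
        (integral_condExp hm'0).symm
    _ = ∫ x, ((π[B.indicator (fun _ => (1:ℝ))|m']) * π[C.indicator (fun _ => (1:ℝ))|m']) x ∂π :=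
        integral_congr_ae pull
    _ = ∫ x, (π[(B ∩ C).indicator (fun _ => (1:ℝ))|m']) x ∂π :=
        (integral_congr_ae (hci B C hB hC)).symm
    _ = ∫ x, (B ∩ C).indicator (fun _ => (1:ℝ)) x ∂π := integral_condExp hm'0
    _ = ∫ x in C, B.indicator (fun _ => (1:ℝ)) x ∂π := by
        rw [← integral_indicator hC0, Set.indicator_indicator, Set.inter_comm]

/-- Pull-out property at the level of integrals. -/
lemma aux_integral_mul_condexp {α : Type*} {m : MeasurableSpace α} {mα : MeasurableSpace α}
    {π : Measure α} [IsProbabilityMeasure π] (hm : m ≤ mα)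
    {f g : α → ℝ} (hf : StronglyMeasurable[m] f) (hfg : Integrable (f * g) π)
    (hg : Integrable g π) :
    ∫ x, (f * g) x ∂π = ∫ x, (f * π[g|m]) x ∂π := by
  rw [← integral_condExp hm (μ := π) (f := f * g)]
  exact integral_congr_ae (condExp_mul_of_stronglyMeasurable_left hf hfg hg)

/-- Dynkin-system argument: equality of set integrals on rectangles extends to the
join σ-algebra. -/
lemma aux_setIntegral_sup {α : Type*} {mA mB : MeasurableSpace α} {mα : MeasurableSpace α}
    {π : Measure α} [IsProbabilityMeasure π] (hA : mA ≤ mα) (hB : mB ≤ mα)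
    {u v : α → ℝ} (hu : Integrable u π) (hv : Integrable v π)
    (hrect : ∀ A B, MeasurableSet[mA] A → MeasurableSet[mB] B →
      ∫ x in A ∩ B, u x ∂π = ∫ x in A ∩ B, v x ∂π) :
    ∀ C, MeasurableSet[mA ⊔ mB] C → ∫ x in C, u x ∂π = ∫ x in C, v x ∂π := by
  have hsup : mA ⊔ mB ≤ mα := sup_le hA hB
  have htot : ∫ x, u x ∂π = ∫ x, v x ∂π := by
    have := hrect univ univ MeasurableSet.univ MeasurableSet.univ
    simpa using this
  set S : Set (Set α) := {C | ∃ A B, MeasurableSet[mA] A ∧ MeasurableSet[mB] B ∧ C = A ∩ B}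
    with hS
  have hgen : mA ⊔ mB = MeasurableSpace.generateFrom S := by
    refine le_antisymm (sup_le ?_ ?_) (MeasurableSpace.generateFrom_le ?_)
    · exact fun s hs => MeasurableSpace.measurableSet_generateFrom
        ⟨s, univ, hs, MeasurableSet.univ, by simp⟩
    · exact fun s hs => MeasurableSpace.measurableSet_generateFrom
        ⟨univ, s, MeasurableSet.univ, hs, by simp⟩
    · rintro C ⟨A, B, hA', hB', rfl⟩
      exact MeasurableSet.inter ((le_sup_left : mA ≤ mA ⊔ mB) _ hA')
        ((le_sup_right : mB ≤ mA ⊔ mB) _ hB')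
  have hpi : IsPiSystem S := by
    rintro C1 ⟨A1, B1, hA1, hB1, rfl⟩ C2 ⟨A2, B2, hA2, hB2, rfl⟩ -
    exact ⟨A1 ∩ A2, B1 ∩ B2, hA1.inter hA2, hB1.inter hB2, by
      rw [Set.inter_inter_inter_comm]⟩
  intro C hC
  refine MeasurableSpace.induction_on_inter (m := mA ⊔ mB)
    (C := fun D _ => ∫ x in D, u x ∂π = ∫ x in D, v x ∂π) hgen hpi ?_ ?_ ?_ ?_ C hC
  · simp only [Measure.restrict_empty, integral_zero_measure]
  · rintro C' ⟨A, B, hA', hB', rfl⟩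
    exact hrect _ _ hA' hB'
  · intro C' hC'm hC'eq
    have hC0 : MeasurableSet C' := hsup _ hC'm
    have h1 := integral_add_compl hC0 hu
    have h2 := integral_add_compl hC0 hv
    have : ∫ x in C', u x ∂π + ∫ x in C'ᶜ, u x ∂π
        = ∫ x in C', v x ∂π + ∫ x in C'ᶜ, v x ∂π := by rw [h1, h2, htot]
    linarith
  · intro f hdisj hmeas hPs
    rw [integral_iUnion (fun n => hsup _ (hmeas n)) hdisj hu.integrableOn,
      integral_iUnion (fun n => hsup _ (hmeas n)) hdisj hv.integrableOn]
    exact tsum_congr fun n => hPs n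

-- ===== measurability on path space =====

lemma meas_eval_evalSigma {T : ℝ} {d : ℕ} {t s : ℝ} (ht0 : 0 ≤ t) (htT : t ≤ T) (hts : t ≤ s) :
    Measurable[evalSigma T d s] fun ω : ContPath T d => ω.1 t :=
  (comap_measurable _).mono
    (le_iSup (fun r : {r : ℝ // 0 ≤ r ∧ r ≤ T ∧ r ≤ s} =>
      MeasurableSpace.comap (fun ω : ContPath T d => ω.1 r.1) inferInstance)
      ⟨t, ht0, htT, hts⟩) le_rfl

lemma evalSigma_le {T : ℝ} {d : ℕ} {s s' : ℝ} (h : s ≤ s') :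
    evalSigma T d s ≤ evalSigma T d s' :=
  iSup_le fun r => le_iSup (fun r : {r : ℝ // 0 ≤ r ∧ r ≤ T ∧ r ≤ s'} =>
    MeasurableSpace.comap (fun ω : ContPath T d => ω.1 r.1) inferInstance)
    ⟨r.1, r.2.1, r.2.2.1, r.2.2.2.trans h⟩

lemma FilC_le_top {T : ℝ} {d : ℕ} (s : ℝ) : FilC T d s ≤ evalSigma T d T := by
  rw [FilC]
  split_ifs with h
  · exact iInf_le_of_le ⟨T, h, le_rfl⟩ le_rfl
  · exact le_rfl

lemma meas_eval_FilC {T : ℝ} {d : ℕ} {t s : ℝ} (ht0 : 0 ≤ t) (htT : t ≤ T) (hts : t ≤ s) :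
    Measurable[FilC T d s] fun ω : ContPath T d => ω.1 t := by
  by_cases h : s < T
  · have hF : FilC T d s = ⨅ s' : {s' : ℝ // s < s' ∧ s' ≤ T}, evalSigma T d s'.1 := if_pos h
    rw [hF]
    intro U hU
    exact MeasurableSpace.measurableSet_iInf.mpr fun s' =>
      meas_eval_evalSigma ht0 htT (hts.trans s'.2.1.le) hU
  · have hF : FilC T d s = evalSigma T d T := if_neg h
    rw [hF]
    exact meas_eval_evalSigma ht0 htT htT

-- ===== rectangle step =====

lemma aux_rect {P Ω : Type*} {mFs : MeasurableSpace Ω} {mB : MeasurableSpace P}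
    {mP : MeasurableSpace P} {mΩ : MeasurableSpace Ω}
    {π : Measure P} [IsProbabilityMeasure π] {μ : Measure Ω} [IsProbabilityMeasure μ]
    {p : P → Ω} (hp : Measurable p) (hmap : π.map p = μ)
    (hFs : mFs ≤ mΩ) (hmB : mB ≤ mP)
    (hci : CondIndepOn π (mFs.comap p) mB (mΩ.comap p))
    {xt xs : Ω → ℝ} (hxt_int : Integrable xt μ) (hxs_int : Integrable xs μ)
    (hxt_meas : Measurable xt) (hxs_meas : Measurable[mFs] xs)
    (hmart : μ[xt|mFs] =ᵐ[μ] xs)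
    {A B : Set P} (hA : MeasurableSet[mFs.comap p] A) (hB : MeasurableSet[mB] B) :
    ∫ z in A ∩ B, xt (p z) ∂π = ∫ z in A ∩ B, xs (p z) ∂π := by
  have hm2 : mΩ.comap p ≤ mP := hp.comap_le
  have hm'2 : mFs.comap p ≤ mΩ.comap p := MeasurableSpace.comap_mono hFs
  have hm'0 : mFs.comap p ≤ mP := hm'2.trans hm2
  set u : P → ℝ := fun z => xt (p z) with hu_def
  set v : P → ℝ := fun z => xs (p z) with hv_def
  have hu_int : Integrable u π := by
    rw [← hmap] at hxt_int
    exact (integrable_map_measure hxt_int.1 hp.aemeasurable).mp hxt_int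
  have hv_int : Integrable v π := by
    rw [← hmap] at hxs_int
    exact (integrable_map_measure hxs_int.1 hp.aemeasurable).mp hxs_int
  have hA0 : MeasurableSet A := hm'0 _ hA
  have hB0 : MeasurableSet B := hmB _ hB
  have hAm2 : MeasurableSet[mΩ.comap p] A := hm'2 _ hA
  have hu_m2 : Measurable[mΩ.comap p] u := hxt_meas.comp (comap_measurable p)
  have hv_m' : Measurable[mFs.comap p] v := hxs_meas.comp (comap_measurable p)
  set iB : P → ℝ := B.indicator (fun _ => (1:ℝ)) with hiB_def
  have hiB_int : Integrable iB π := (integrable_const 1).indicator hB0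
  have key : ∀ w : P → ℝ, A.indicator w * iB = (A ∩ B).indicator w := by
    intro w; funext x
    by_cases h1 : x ∈ A <;> by_cases h2 : x ∈ B <;>
      simp [hiB_def, Set.indicator_apply, h1, h2]
  have comm : ∀ w h : P → ℝ, A.indicator w * h = A.indicator h * w := by
    intro w h; funext x
    by_cases h1 : x ∈ A <;> simp [Set.indicator_apply, h1, mul_comm]
  set g0 : P → ℝ := π[iB | mFs.comap p] with hg0_def
  have hg0_sm : StronglyMeasurable[mFs.comap p] g0 := stronglyMeasurable_condExp
  have hg0_nonneg : 0 ≤ᵐ[π] g0 :=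
    condExp_nonneg (Eventually.of_forall fun x => Set.indicator_nonneg (fun _ _ => zero_le_one) x)
  have hg0_le1 : g0 ≤ᵐ[π] fun _ => (1:ℝ) := by
    have h1 : iB ≤ᵐ[π] fun _ => (1:ℝ) :=
      Eventually.of_forall fun x => Set.indicator_le_self' (fun _ _ => zero_le_one) x
    have h2 := condExp_mono (m := mFs.comap p) hiB_int (integrable_const 1) h1
    rwa [condExp_const hm'0] at h2
  have hg0eq : π[iB | mΩ.comap p] =ᵐ[π] g0 :=
    aux_condexp_indicator_condIndep hm'2 hm2 hci hB hB0
  have hcond_u : π[u | mFs.comap p] =ᵐ[π] v := by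
    have h1 := aux_condexp_comap hp hmap hFs hxt_int
    have h2 : (fun a => (μ[xt|mFs]) (p a)) =ᵐ[π] v := by
      have hmart' : μ[xt|mFs] =ᵐ[π.map p] xs := by rw [hmap]; exact hmart
      exact MeasureTheory.ae_eq_comp hp.aemeasurable hmart'
    exact h1.trans h2
  have hint1 : Integrable (A.indicator u * iB) π := by
    rw [key u]; exact hu_int.indicator (hA0.inter hB0)
  have hint3 : Integrable (A.indicator v * iB) π := by
    rw [key v]; exact hv_int.indicator (hA0.inter hB0)
  have hint2 : Integrable (A.indicator g0 * u) π := by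
    refine Integrable.mono hu_int
      (((hg0_sm.indicator hA).mono hm'0).aestronglyMeasurable.mul hu_int.1) ?_
    filter_upwards [hg0_nonneg, hg0_le1] with x h0 h1
    by_cases hx : x ∈ A
    · simp only [Pi.mul_apply, Set.indicator_of_mem hx, Real.norm_eq_abs, abs_mul]
      have h0' : (0:ℝ) ≤ g0 x := h0
      have hle : |g0 x| ≤ 1 := abs_le.mpr ⟨by linarith, h1⟩
      calc |g0 x| * |u x| ≤ 1 * |u x| := mul_le_mul_of_nonneg_right hle (abs_nonneg _)
        _ = |u x| := one_mul _
    · simp [Set.indicator_of_notMem hx]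
  calc ∫ z in A ∩ B, u z ∂π
      = ∫ z, (A ∩ B).indicator u z ∂π := (integral_indicator (hA0.inter hB0)).symm
    _ = ∫ z, (A.indicator u * iB) z ∂π := by rw [key u]
    _ = ∫ z, (A.indicator u * π[iB|mΩ.comap p]) z ∂π :=
        aux_integral_mul_condexp hm2 ((hu_m2.indicator hAm2).stronglyMeasurable) hint1 hiB_int
    _ = ∫ z, (A.indicator u * g0) z ∂π :=
        integral_congr_ae ((EventuallyEq.refl _ _).mul hg0eq)
    _ = ∫ z, (A.indicator g0 * u) z ∂π := by rw [comm u g0]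
    _ = ∫ z, (A.indicator g0 * π[u|mFs.comap p]) z ∂π :=
        aux_integral_mul_condexp hm'0 (hg0_sm.indicator hA) hint2 hu_int
    _ = ∫ z, (A.indicator g0 * v) z ∂π :=
        integral_congr_ae ((EventuallyEq.refl _ _).mul hcond_u)
    _ = ∫ z, (A.indicator v * g0) z ∂π := by rw [← comm v g0]
    _ = ∫ z, (A.indicator v * iB) z ∂π :=
        (aux_integral_mul_condexp hm'0 ((hv_m'.indicator hA).stronglyMeasurable) hint3 hiB_int).symm
    _ = ∫ z, (A ∩ B).indicator v z ∂π := by rw [key v]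
    _ = ∫ z in A ∩ B, v z ∂π := integral_indicator (hA0.inter hB0)

end

/-- Let `μ` and `ν` be probability measures on `X = C_0([0,T]; ℝ^d)` under
each of which every coordinate of the canonical process is integrable and the canonical process
is a martingale with respect to the right-continuous natural filtration. Then for every bicausal
coupling `π` of `(μ, ν)`, the `ℝ^{2d}`-valued process `(X_t, Y_t)_{t ∈ [0,T]}` formed by the two
canonical coordinate processes is a martingale under `π` with respect to the product filtration
`(F_t ⊗ G_t)_{t ∈ [0,T]}`. -/
theorem statement_0 (T : ℝ) (hT : 0 < T) (d : ℕ)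
    (μ ν : Measure (ContPath T d)) [IsProbabilityMeasure μ] [IsProbabilityMeasure ν]
    (hμ : IsMartingaleMeasureC T d μ) (hν : IsMartingaleMeasureC T d ν)
    (π : Measure (ContPath T d × ContPath T d)) [IsProbabilityMeasure π]
    (hπ : IsBicausalCouplingC T d μ ν π) :
    (∀ t ∈ Set.Icc (0 : ℝ) T,
      Integrable (fun z : ContPath T d × ContPath T d => (z.1.1 t, z.2.1 t)) π) ∧
    ∀ s t : ℝ, 0 ≤ s → s ≤ t → t ≤ T →
      (π[(fun z : ContPath T d × ContPath T d => (z.1.1 t, z.2.1 t)) |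
          (FilC T d s).comap Prod.fst ⊔ (FilC T d s).comap Prod.snd]) =ᵐ[π]
        (fun z => (z.1.1 s, z.2.1 s)) := by
  obtain ⟨⟨hmap2, hmap1, hcX⟩, hcY⟩ := hπ
  have intX : ∀ u : ℝ, 0 ≤ u → u ≤ T →
      Integrable (fun z : ContPath T d × ContPath T d => z.1.1 u) π := by
    intro u h0 h1
    have h := hμ.1 u ⟨h0, h1⟩
    rw [← hmap1] at h
    exact (integrable_map_measure h.1 measurable_fst.aemeasurable).mp h
  have intY : ∀ u : ℝ, 0 ≤ u → u ≤ T →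
      Integrable (fun z : ContPath T d × ContPath T d => z.2.1 u) π := by
    intro u h0 h1
    have h := hν.1 u ⟨h0, h1⟩
    rw [← hmap2] at h
    exact (integrable_map_measure h.1 measurable_snd.aemeasurable).mp h
  refine ⟨fun u hu => (intX u hu.1 hu.2).prodMk (intY u hu.1 hu.2), ?_⟩
  intro s t hs0 hst htT
  have hsT : s ≤ T := hst.trans htT
  have ht0 : 0 ≤ t := hs0.trans hst
  have hFle : FilC T d s ≤ evalSigma T d T := FilC_le_top s
  have hmF0 : (FilC T d s).comap (Prod.fst : ContPath T d × ContPath T d → ContPath T d) ≤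
      (inferInstance : MeasurableSpace (ContPath T d × ContPath T d)) :=
    (MeasurableSpace.comap_mono hFle).trans measurable_fst.comap_le
  have hmG0 : (FilC T d s).comap (Prod.snd : ContPath T d × ContPath T d → ContPath T d) ≤
      (inferInstance : MeasurableSpace (ContPath T d × ContPath T d)) :=
    (MeasurableSpace.comap_mono hFle).trans measurable_snd.comap_le
  have hmJ : (FilC T d s).comap (Prod.fst : ContPath T d × ContPath T d → ContPath T d) ⊔
      (FilC T d s).comap (Prod.snd : ContPath T d × ContPath T d → ContPath T d) ≤
      (inferInstance : MeasurableSpace (ContPath T d × ContPath T d)) := sup_le hmF0 hmG0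
  -- coordinate integrability and measurability at the path-space level
  have intCoordμ : ∀ u : ℝ, 0 ≤ u → u ≤ T → ∀ i : Fin d,
      Integrable (fun ω : ContPath T d => ω.1 u i) μ := by
    intro u h0 h1 i
    have := (ContinuousLinearMap.proj (R := ℝ) (φ := fun _ : Fin d => ℝ) i).integrable_comp
      (hμ.1 u ⟨h0, h1⟩)
    exact this
  have intCoordν : ∀ u : ℝ, 0 ≤ u → u ≤ T → ∀ i : Fin d,
      Integrable (fun ω : ContPath T d => ω.1 u i) ν := by
    intro u h0 h1 i
    have := (ContinuousLinearMap.proj (R := ℝ) (φ := fun _ : Fin d => ℝ) i).integrable_comp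
      (hν.1 u ⟨h0, h1⟩)
    exact this
  have measCoord : ∀ u : ℝ, 0 ≤ u → u ≤ T → ∀ i : Fin d,
      Measurable (fun ω : ContPath T d => ω.1 u i) := by
    intro u h0 h1 i
    exact (measurable_pi_apply i).comp (meas_eval_evalSigma h0 h1 h1)
  have measCoordF : ∀ i : Fin d, Measurable[FilC T d s] (fun ω : ContPath T d => ω.1 s i) :=
    fun i => (measurable_pi_apply i).comp (meas_eval_FilC hs0 hsT le_rfl)
  -- coordinate martingale property for μ and ν
  have coordMartμ : ∀ i : Fin d,
      μ[(fun ω : ContPath T d => ω.1 t i)|FilC T d s] =ᵐ[μ] fun ω => ω.1 s i := by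
    intro i
    have h1 : μ[(fun ω : ContPath T d => ω.1 t i)|FilC T d s] =ᵐ[μ]
        fun a => (μ[(fun ω : ContPath T d => ω.1 t)|FilC T d s]) a i := by
      have := aux_condexp_clm hFle (ContinuousLinearMap.proj (R := ℝ) (φ := fun _ : Fin d => ℝ) i)
        (hμ.1 t ⟨ht0, htT⟩)
      exact this
    refine h1.trans ?_
    filter_upwards [hμ.2 s t hs0 hst htT] with ω hω
    rw [hω]
  have coordMartν : ∀ i : Fin d,
      ν[(fun ω : ContPath T d => ω.1 t i)|FilC T d s] =ᵐ[ν] fun ω => ω.1 s i := by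
    intro i
    have h1 : ν[(fun ω : ContPath T d => ω.1 t i)|FilC T d s] =ᵐ[ν]
        fun a => (ν[(fun ω : ContPath T d => ω.1 t)|FilC T d s]) a i := by
      have := aux_condexp_clm hFle (ContinuousLinearMap.proj (R := ℝ) (φ := fun _ : Fin d => ℝ) i)
        (hν.1 t ⟨ht0, htT⟩)
      exact this
    refine h1.trans ?_
    filter_upwards [hν.2 s t hs0 hst htT] with ω hω
    rw [hω]
  -- coordinatewise set-integral equalities on the join σ-algebra
  have hXkey : ∀ (i : Fin d) C, MeasurableSet[(FilC T d s).comap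
        (Prod.fst : ContPath T d × ContPath T d → ContPath T d) ⊔
        (FilC T d s).comap (Prod.snd : ContPath T d × ContPath T d → ContPath T d)] C →
      ∫ z in C, z.1.1 t i ∂π = ∫ z in C, z.1.1 s i ∂π := by
    intro i
    have hintu : Integrable (fun z : ContPath T d × ContPath T d => z.1.1 t i) π := by
      have h := intCoordμ t ht0 htT i
      rw [← hmap1] at h
      exact (integrable_map_measure h.1 measurable_fst.aemeasurable).mp h
    have hintv : Integrable (fun z : ContPath T d × ContPath T d => z.1.1 s i) π := by
      have h := intCoordμ s hs0 hsT i
      rw [← hmap1] at h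
      exact (integrable_map_measure h.1 measurable_fst.aemeasurable).mp h
    refine aux_setIntegral_sup hmF0 hmG0 hintu hintv ?_
    intro A B hA hB
    exact aux_rect measurable_fst hmap1 hFle hmG0 (hcX s ⟨hs0, hsT⟩)
      (intCoordμ t ht0 htT i) (intCoordμ s hs0 hsT i) (measCoord t ht0 htT i) (measCoordF i)
      (coordMartμ i) hA hB
  have hYkey : ∀ (i : Fin d) C, MeasurableSet[(FilC T d s).comap
        (Prod.fst : ContPath T d × ContPath T d → ContPath T d) ⊔
        (FilC T d s).comap (Prod.snd : ContPath T d × ContPath T d → ContPath T d)] C →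
      ∫ z in C, z.2.1 t i ∂π = ∫ z in C, z.2.1 s i ∂π := by
    intro i
    have hintu : Integrable (fun z : ContPath T d × ContPath T d => z.2.1 t i) π := by
      have h := intCoordν t ht0 htT i
      rw [← hmap2] at h
      exact (integrable_map_measure h.1 measurable_snd.aemeasurable).mp h
    have hintv : Integrable (fun z : ContPath T d × ContPath T d => z.2.1 s i) π := by
      have h := intCoordν s hs0 hsT i
      rw [← hmap2] at h
      exact (integrable_map_measure h.1 measurable_snd.aemeasurable).mp h
    refine aux_setIntegral_sup hmF0 hmG0 hintu hintv ?_
    intro A B hA hB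
    rw [Set.inter_comm]
    exact aux_rect measurable_snd hmap2 hFle hmF0 (hcY s ⟨hs0, hsT⟩)
      (intCoordν t ht0 htT i) (intCoordν s hs0 hsT i) (measCoord t ht0 htT i) (measCoordF i)
      (coordMartν i) hB hA
  -- assemble
  have hf_int : Integrable (fun z : ContPath T d × ContPath T d => (z.1.1 t, z.2.1 t)) π :=
    (intX t ht0 htT).prodMk (intY t ht0 htT)
  have hg_int : Integrable (fun z : ContPath T d × ContPath T d => (z.1.1 s, z.2.1 s)) π :=
    (intX s hs0 hsT).prodMk (intY s hs0 hsT)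
  have hgm : AEStronglyMeasurable[(FilC T d s).comap
        (Prod.fst : ContPath T d × ContPath T d → ContPath T d) ⊔
        (FilC T d s).comap (Prod.snd : ContPath T d × ContPath T d → ContPath T d)]
      (fun z : ContPath T d × ContPath T d => (z.1.1 s, z.2.1 s)) π := by
    have m1 : Measurable[(FilC T d s).comap
          (Prod.fst : ContPath T d × ContPath T d → ContPath T d) ⊔
          (FilC T d s).comap (Prod.snd : ContPath T d × ContPath T d → ContPath T d)]
        (fun z : ContPath T d × ContPath T d => z.1.1 s) :=
      ((meas_eval_FilC hs0 hsT le_rfl).comp (comap_measurable Prod.fst)).mono le_sup_left le_rfl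
    have m2 : Measurable[(FilC T d s).comap
          (Prod.fst : ContPath T d × ContPath T d → ContPath T d) ⊔
          (FilC T d s).comap (Prod.snd : ContPath T d × ContPath T d → ContPath T d)]
        (fun z : ContPath T d × ContPath T d => z.2.1 s) :=
      ((meas_eval_FilC hs0 hsT le_rfl).comp (comap_measurable Prod.snd)).mono le_sup_right le_rfl
    exact ((m1.prodMk m2).stronglyMeasurable).aestronglyMeasurable
  refine (ae_eq_condExp_of_forall_setIntegral_eq hmJ hf_int
    (fun C _ _ => hg_int.integrableOn) (fun C hC _ => ?_) hgm).symm
  have qf : ∀ u : ℝ, 0 ≤ u → u ≤ T →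
      (∫ z in C, ((z.1.1 u : Fin d → ℝ), (z.2.1 u : Fin d → ℝ)) ∂π) =
        (∫ z in C, z.1.1 u ∂π, ∫ z in C, z.2.1 u ∂π) := by
    intro u h0 h1
    have hint : IntegrableOn (fun z : ContPath T d × ContPath T d => (z.1.1 u, z.2.1 u)) C π :=
      ((intX u h0 h1).prodMk (intY u h0 h1)).integrableOn
    have h1' := (ContinuousLinearMap.fst ℝ (Fin d → ℝ) (Fin d → ℝ)).integral_comp_comm hint
    have h2' := (ContinuousLinearMap.snd ℝ (Fin d → ℝ) (Fin d → ℝ)).integral_comp_comm hint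
    exact Prod.ext h1'.symm h2'.symm
  rw [qf t ht0 htT, qf s hs0 hsT]
  have eX : ∫ z in C, z.1.1 s ∂π = ∫ z in C, z.1.1 t ∂π := by
    funext i
    have pt := (ContinuousLinearMap.proj (R := ℝ) (φ := fun _ : Fin d => ℝ) i).integral_comp_comm
      ((intX t ht0 htT).integrableOn (s := C))
    have ps := (ContinuousLinearMap.proj (R := ℝ) (φ := fun _ : Fin d => ℝ) i).integral_comp_comm
      ((intX s hs0 hsT).integrableOn (s := C))
    have pt' : ∫ z in C, z.1.1 t i ∂π = (∫ z in C, z.1.1 t ∂π) i := pt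
    have ps' : ∫ z in C, z.1.1 s i ∂π = (∫ z in C, z.1.1 s ∂π) i := ps
    rw [← ps', ← pt']
    exact (hXkey i C hC).symm
  have eY : ∫ z in C, z.2.1 s ∂π = ∫ z in C, z.2.1 t ∂π := by
    funext i
    have pt := (ContinuousLinearMap.proj (R := ℝ) (φ := fun _ : Fin d => ℝ) i).integral_comp_comm
      ((intY t ht0 htT).integrableOn (s := C))
    have ps := (ContinuousLinearMap.proj (R := ℝ) (φ := fun _ : Fin d => ℝ) i).integral_comp_comm
      ((intY s hs0 hsT).integrableOn (s := C))
    have pt' : ∫ z in C, z.2.1 t i ∂π = (∫ z in C, z.2.1 t ∂π) i := pt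
    have ps' : ∫ z in C, z.2.1 s i ∂π = (∫ z in C, z.2.1 s ∂π) i := ps
    rw [← ps', ← pt']
    exact (hYkey i C hC).symm
  rw [eX, eY]
end

section
/- Let f: D([0,T]; ℝ^d) → ℝ be pathwise Malliavin differentiable with derivative 𝔻f, and assume that f and, for every t ∈ [0,T], the map ω ↦ 𝔻_t f(ω) are continuous with respect to the uniform norm. Then for every ω ∈ D([0,T]; ℝ^d) and every simple step path η = Σ_{k=1}^n e_k 1_{[t_k, T]} (with e_k ∈ ℝ^d and t_k ∈ [0,T]), one has lim_{ε→0} (f(ω + ε η) − f(ω))/ε = Σ_{k=1}^n ⟨𝔻_{t_k} f(ω), e_k⟩. -/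
open MeasureTheory Filter Set

noncomputable section

/-- `ω : ℝ → ℝ^d` is càdlàg on `[0,T]`: right-continuous at every `t ∈ [0,T)` (within `[0,T]`)
and with left limits (within `[0,T]`) at every `t ∈ (0,T]`. -/
def CadlagOn (T : ℝ) {d : ℕ} (ω : ℝ → Fin d → ℝ) : Prop :=
  (∀ t ∈ Set.Ico (0 : ℝ) T, Tendsto ω (nhdsWithin t (Set.Ioc t T)) (nhds (ω t))) ∧
  (∀ t ∈ Set.Ioc (0 : ℝ) T, ∃ l : Fin d → ℝ, Tendsto ω (nhdsWithin t (Set.Ico 0 t)) (nhds l))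

/-- The bump path `e·1_{[t,T]}`. -/
def bump (T : ℝ) {d : ℕ} (t : ℝ) (e : Fin d → ℝ) : ℝ → Fin d → ℝ :=
  Set.indicator (Set.Icc t T) (fun _ => e)

/-- `f` is pathwise Malliavin differentiable on `D([0,T]; ℝ^d)` with derivative `Df`:
for every càdlàg `ω`, every `t ∈ [0,T]` and every `e ∈ ℝ^d`,
`(f(ω + ε e 1_{[t,T]}) − f(ω))/ε → ⟨Df ω t, e⟩` as `ε → 0`. -/
def HasPathwiseMalliavinDeriv (T : ℝ) {d : ℕ} (f : (ℝ → Fin d → ℝ) → ℝ)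
    (Df : (ℝ → Fin d → ℝ) → ℝ → Fin d → ℝ) : Prop :=
  ∀ ω : ℝ → Fin d → ℝ, CadlagOn T ω → ∀ t ∈ Set.Icc (0 : ℝ) T, ∀ e : Fin d → ℝ,
    Tendsto (fun ε : ℝ => (f (ω + ε • bump T t e) - f ω) / ε)
      (nhdsWithin 0 {(0 : ℝ)}ᶜ) (nhds (∑ i, Df ω t i * e i))

/-- Continuity of a real functional on càdlàg paths with respect to the uniform norm on `[0,T]`
(sequential formulation). -/
def UnifContOnCadlag (T : ℝ) {d : ℕ} (f : (ℝ → Fin d → ℝ) → ℝ) : Prop :=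
  ∀ (ω : ℝ → Fin d → ℝ) (ωs : ℕ → ℝ → Fin d → ℝ),
    CadlagOn T ω → (∀ n, CadlagOn T (ωs n)) →
    TendstoUniformlyOn ωs ω atTop (Set.Icc 0 T) →
    Tendsto (fun n => f (ωs n)) atTop (nhds (f ω))

/-- Continuity of an `ℝ^d`-valued functional on càdlàg paths with respect to the uniform norm
on `[0,T]` (sequential formulation). -/
def UnifContOnCadlagVec (T : ℝ) {d : ℕ} (F : (ℝ → Fin d → ℝ) → Fin d → ℝ) : Prop :=
  ∀ (ω : ℝ → Fin d → ℝ) (ωs : ℕ → ℝ → Fin d → ℝ),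
    CadlagOn T ω → (∀ n, CadlagOn T (ωs n)) →
    TendstoUniformlyOn ωs ω atTop (Set.Icc 0 T) →
    Tendsto (fun n => F (ωs n)) atTop (nhds (F ω))

/-- `F : [0,T] × D([0,T];ℝ^d) → ℝ^d` has left limits: whenever `ω^n → ω` uniformly on `[0,T]`
and `t^n ↑ t` with `t^n < t`, `F(t^n, ω^n)` converges to a limit depending only on `(t, ω)`. -/
def HasLeftLimits (T : ℝ) {d : ℕ} (F : (ℝ → Fin d → ℝ) → ℝ → Fin d → ℝ) : Prop :=
  ∀ ω : ℝ → Fin d → ℝ, CadlagOn T ω → ∀ t ∈ Set.Ioc (0 : ℝ) T, ∃ l : Fin d → ℝ,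
    ∀ (ωs : ℕ → ℝ → Fin d → ℝ) (ts : ℕ → ℝ),
      (∀ n, CadlagOn T (ωs n)) →
      TendstoUniformlyOn ωs ω atTop (Set.Icc 0 T) →
      (∀ n, ts n < t) → Monotone ts → Tendsto ts atTop (nhds t) →
      Tendsto (fun n => F (ωs n) (ts n)) atTop (nhds l)

/-- `F` is boundedness preserving: `sup_{t ∈ [0,T]} sup_{‖ω‖_∞ < K} |F(t, ω)| < ∞` for every
`K > 0`. -/
def BoundednessPreserving (T : ℝ) {d : ℕ} (F : (ℝ → Fin d → ℝ) → ℝ → Fin d → ℝ) : Prop :=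
  ∀ K : ℝ, 0 < K → ∃ M : ℝ,
    ∀ ω : ℝ → Fin d → ℝ, CadlagOn T ω → (∀ s ∈ Set.Icc (0 : ℝ) T, ‖ω s‖ < K) →
      ∀ t ∈ Set.Icc (0 : ℝ) T, ‖F ω t‖ ≤ M

end

section Aux
variable {T : ℝ} {d : ℕ}

lemma CadlagOn.add {ω ω' : ℝ → Fin d → ℝ} (h : CadlagOn T ω) (h' : CadlagOn T ω') :
    CadlagOn T (ω + ω') := by
  constructor
  · intro t ht
    exact ((h.1 t ht).add (h'.1 t ht) : _)
  · intro t ht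
    obtain ⟨l, hl⟩ := h.2 t ht
    obtain ⟨l', hl'⟩ := h'.2 t ht
    exact ⟨l + l', (hl.add hl' : _)⟩

lemma CadlagOn.const_smul {ω : ℝ → Fin d → ℝ} (h : CadlagOn T ω) (c : ℝ) :
    CadlagOn T (c • ω) := by
  constructor
  · intro t ht
    exact ((h.1 t ht).const_smul c : _)
  · intro t ht
    obtain ⟨l, hl⟩ := h.2 t ht
    exact ⟨c • l, (hl.const_smul c : _)⟩

lemma cadlagOn_bump (t : ℝ) (e : Fin d → ℝ) : CadlagOn T (bump T t e) := by
  constructor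
  · intro s hs
    rcases lt_or_ge s t with h | h
    · have hb : bump T t e s = 0 := by
        apply Set.indicator_of_notMem
        simp only [Set.mem_Icc, not_and_or]
        exact Or.inl (not_le.2 h)
      rw [hb]
      have hev : ∀ᶠ u in nhdsWithin s (Set.Ioc s T), (0 : Fin d → ℝ) = bump T t e u := by
        filter_upwards [nhdsWithin_le_nhds (eventually_lt_nhds h)] with u hu
        exact (Set.indicator_of_notMem (by simp only [Set.mem_Icc, not_and_or]; exact Or.inl (not_le.2 hu)) (fun _ => e)).symm
      exact Tendsto.congr' hev tendsto_const_nhds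
    · have hb : bump T t e s = e :=
        Set.indicator_of_mem (Set.mem_Icc.2 ⟨h, le_of_lt hs.2⟩) _
      rw [hb]
      have hev : ∀ᶠ u in nhdsWithin s (Set.Ioc s T), e = bump T t e u := by
        filter_upwards [self_mem_nhdsWithin] with u hu
        exact (Set.indicator_of_mem (Set.mem_Icc.2 ⟨le_of_lt (lt_of_le_of_lt h hu.1), hu.2⟩) (fun _ => e)).symm
      exact Tendsto.congr' hev tendsto_const_nhds
  · intro s hs
    rcases le_or_gt s t with h | h
    · refine ⟨0, ?_⟩
      have hev : ∀ᶠ u in nhdsWithin s (Set.Ico 0 s), (0 : Fin d → ℝ) = bump T t e u := by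
        filter_upwards [self_mem_nhdsWithin] with u hu
        exact (Set.indicator_of_notMem (by simp only [Set.mem_Icc, not_and_or]; exact Or.inl (not_le.2 (lt_of_lt_of_le hu.2 h))) (fun _ => e)).symm
      exact Tendsto.congr' hev tendsto_const_nhds
    · refine ⟨e, ?_⟩
      have hev : ∀ᶠ u in nhdsWithin s (Set.Ico 0 s), e = bump T t e u := by
        filter_upwards [self_mem_nhdsWithin, nhdsWithin_le_nhds (eventually_gt_nhds h)] with u hu hu'
        exact (Set.indicator_of_mem (Set.mem_Icc.2 ⟨le_of_lt hu', le_trans (le_of_lt hu.2) hs.2⟩) (fun _ => e)).symm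
      exact Tendsto.congr' hev tendsto_const_nhds

lemma cadlagOn_zero : CadlagOn T (0 : ℝ → Fin d → ℝ) :=
  ⟨fun _ _ => tendsto_const_nhds, fun _ _ => ⟨0, tendsto_const_nhds⟩⟩

lemma cadlagOn_sum {ι : Type*} (s : Finset ι) (g : ι → ℝ → Fin d → ℝ)
    (h : ∀ i ∈ s, CadlagOn T (g i)) : CadlagOn T (∑ i ∈ s, g i) := by
  classical
  induction s using Finset.induction_on with
  | empty => simpa using cadlagOn_zero
  | insert _ _ hni ih =>
    rw [Finset.sum_insert hni]
    exact (h _ (Finset.mem_insert_self _ _)).add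
      (ih fun i hi => h i (Finset.mem_insert_of_mem hi))

lemma bump_norm_le (t : ℝ) (e : Fin d → ℝ) (s : ℝ) : ‖bump T t e s‖ ≤ ‖e‖ :=
  norm_indicator_le_norm_self (fun _ => e) s
end Aux

section Key
variable {T : ℝ} {d : ℕ}

lemma hasDerivAt_along_bump {f : (ℝ → Fin d → ℝ) → ℝ} {Df : (ℝ → Fin d → ℝ) → ℝ → Fin d → ℝ}
    (hdiff : HasPathwiseMalliavinDeriv T f Df)
    {ω₀ : ℝ → Fin d → ℝ} (hω₀ : CadlagOn T ω₀) {t : ℝ} (ht : t ∈ Set.Icc (0 : ℝ) T)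
    (e : Fin d → ℝ) (s : ℝ) :
    HasDerivAt (fun s : ℝ => f (ω₀ + s • bump T t e))
      (∑ i, Df (ω₀ + s • bump T t e) t i * e i) s := by
  have hc : CadlagOn T (ω₀ + s • bump T t e) :=
    hω₀.add ((cadlagOn_bump t e).const_smul s)
  have H := hdiff (ω₀ + s • bump T t e) hc t ht e
  rw [hasDerivAt_iff_tendsto_slope]
  have h1 : Tendsto (fun y : ℝ => y - s) (nhdsWithin s {s}ᶜ) (nhdsWithin 0 {(0:ℝ)}ᶜ) := by
    refine Tendsto.inf ?_ (tendsto_principal_principal.2 fun y hy => sub_ne_zero.2 hy)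
    have h2 : Tendsto (fun y : ℝ => y - s) (nhds s) (nhds (s - s)) :=
      (continuous_id.tendsto s).sub_const s
    rw [sub_self] at h2
    exact h2
  have H2 := H.comp h1
  apply H2.congr
  intro y
  simp only [Function.comp_apply, slope_def_field]
  have harg : ω₀ + s • bump T t e + (y - s) • bump T t e = ω₀ + y • bump T t e := by
    funext u
    simp only [Pi.add_apply, Pi.smul_apply]
    module
  rw [harg]

/-- MVT step: for `ε ≠ 0` the difference quotient equals the derivative at an
intermediate point `c` with `|c| ≤ |ε|`. -/
lemma mvt_step {f : (ℝ → Fin d → ℝ) → ℝ} {Df : (ℝ → Fin d → ℝ) → ℝ → Fin d → ℝ}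
    (hdiff : HasPathwiseMalliavinDeriv T f Df)
    {ω₀ : ℝ → Fin d → ℝ} (hω₀ : CadlagOn T ω₀) {t : ℝ} (ht : t ∈ Set.Icc (0 : ℝ) T)
    (e : Fin d → ℝ) {ε : ℝ} (hε : ε ≠ 0) :
    ∃ c : ℝ, |c| ≤ |ε| ∧
      (f (ω₀ + ε • bump T t e) - f ω₀) / ε
        = ∑ i, Df (ω₀ + c • bump T t e) t i * e i := by
  set u : ℝ → ℝ := fun s => f (ω₀ + s • bump T t e) with hu
  set D : ℝ → ℝ := fun s => ∑ i, Df (ω₀ + s • bump T t e) t i * e i with hD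
  have hderiv : ∀ s : ℝ, HasDerivAt u (D s) s := fun s =>
    hasDerivAt_along_bump hdiff hω₀ ht e s
  have hcont : ∀ I : Set ℝ, ContinuousOn u I := fun I s _ =>
    (hderiv s).continuousAt.continuousWithinAt
  have hu0 : u 0 = f ω₀ := by simp [hu]
  rcases hε.lt_or_gt with hneg | hpos
  · obtain ⟨c, hc, hceq⟩ := exists_hasDerivAt_eq_slope u D hneg (hcont _)
      (fun x _ => hderiv x)
    refine ⟨c, ?_, ?_⟩
    · rw [abs_le, abs_of_neg hneg]
      exact ⟨by linarith [hc.1], by linarith [hc.2]⟩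
    · rw [hu0] at hceq
      have : (u ε - f ω₀) / ε = (f ω₀ - u ε) / (0 - ε) := by
        rw [zero_sub, div_neg, ← neg_div, neg_sub]
      rw [this, ← hceq]
  · obtain ⟨c, hc, hceq⟩ := exists_hasDerivAt_eq_slope u D hpos (hcont _)
      (fun x _ => hderiv x)
    refine ⟨c, ?_, ?_⟩
    · rw [abs_le, abs_of_pos hpos]
      exact ⟨by linarith [hc.1], by linarith [hc.2]⟩
    · rw [hu0] at hceq
      have : (u ε - f ω₀) / ε = (u ε - f ω₀) / (ε - 0) := by rw [sub_zero]
      rw [this, ← hceq]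

/-- Key lemma: convergence of the moving-base difference quotient. -/
lemma key_tendsto {f : (ℝ → Fin d → ℝ) → ℝ} {Df : (ℝ → Fin d → ℝ) → ℝ → Fin d → ℝ}
    (hT : 0 < T)
    (hdiff : HasPathwiseMalliavinDeriv T f Df)
    (hDcont : ∀ t ∈ Set.Icc (0 : ℝ) T, UnifContOnCadlagVec T (fun ω => Df ω t))
    {ω : ℝ → Fin d → ℝ} (hω : CadlagOn T ω)
    {P : ℝ → Fin d → ℝ} (hP : CadlagOn T P) {C : ℝ}
    (hPC : ∀ s ∈ Set.Icc (0 : ℝ) T, ‖P s‖ ≤ C)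
    {t : ℝ} (ht : t ∈ Set.Icc (0 : ℝ) T) (e : Fin d → ℝ) :
    Tendsto (fun ε : ℝ =>
        (f (ω + ε • P + ε • bump T t e) - f (ω + ε • P)) / ε)
      (nhdsWithin 0 {(0 : ℝ)}ᶜ) (nhds (∑ i, Df ω t i * e i)) := by
  rw [Filter.tendsto_iff_seq_tendsto]
  intro x hx
  have hx0 : Tendsto x atTop (nhds 0) := hx.mono_right nhdsWithin_le_nhds
  have hxne : ∀ᶠ m in atTop, x m ≠ 0 := hx self_mem_nhdsWithin
  have hchoice : ∀ m : ℕ, ∃ c : ℝ, x m ≠ 0 →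
      |c| ≤ |x m| ∧
      (f (ω + x m • P + x m • bump T t e) - f (ω + x m • P)) / x m
        = ∑ i, Df (ω + x m • P + c • bump T t e) t i * e i := by
    intro m
    by_cases hm : x m = 0
    · exact ⟨0, fun h => absurd hm h⟩
    · obtain ⟨c, hc1, hc2⟩ := mvt_step hdiff (hω.add (hP.const_smul (x m))) ht e hm
      refine ⟨c, fun _ => ⟨hc1, ?_⟩⟩
      have : ω + x m • P + c • bump T t e = (ω + x m • P) + c • bump T t e := rfl
      rw [this, ← hc2]
  choose ξ hξ using hchoice
  have hξ0 : Tendsto ξ atTop (nhds 0) := by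
    apply squeeze_zero_norm' (a := fun m => |x m|)
    · filter_upwards [hxne] with m hm
      exact (hξ m hm).1
    · exact hx0.abs.congr' (by filter_upwards with m; rfl) |>.mono_right (by rw [abs_zero])
  -- paths
  set paths : ℕ → ℝ → Fin d → ℝ := fun m => ω + x m • P + ξ m • bump T t e with hpaths
  have hpc : ∀ m, CadlagOn T (paths m) := fun m =>
    (hω.add (hP.const_smul (x m))).add ((cadlagOn_bump t e).const_smul (ξ m))
  have hunif : TendstoUniformlyOn paths ω atTop (Set.Icc 0 T) := by
    rw [Metric.tendstoUniformlyOn_iff]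
    intro δ hδ
    have hbd : Tendsto (fun m => |x m| * C + |ξ m| * ‖e‖) atTop (nhds 0) := by
      have h1 : Tendsto (fun m => |x m| * C) atTop (nhds 0) := by
        simpa using (hx0.abs.mul_const C)
      have h2 : Tendsto (fun m => |ξ m| * ‖e‖) atTop (nhds 0) := by
        simpa using (hξ0.abs.mul_const ‖e‖)
      simpa using h1.add h2
    filter_upwards [hbd.eventually (eventually_lt_nhds hδ)] with m hm s hs
    have : dist (ω s) (paths m s) = ‖x m • P s + ξ m • bump T t e s‖ := by
      rw [dist_eq_norm']
      congr 1
      funext i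
      simp [hpaths]
      ring
    rw [this]
    calc ‖x m • P s + ξ m • bump T t e s‖
        ≤ ‖x m • P s‖ + ‖ξ m • bump T t e s‖ := norm_add_le _ _
      _ = |x m| * ‖P s‖ + |ξ m| * ‖bump T t e s‖ := by
          rw [norm_smul, norm_smul, Real.norm_eq_abs, Real.norm_eq_abs]
      _ ≤ |x m| * C + |ξ m| * ‖e‖ := by
          gcongr
          · exact hPC s hs
          · exact bump_norm_le t e s
      _ < δ := hm
  have hDf : Tendsto (fun m => Df (paths m) t) atTop (nhds (Df ω t)) :=
    hDcont t ht ω paths hω hpc hunif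
  have hmap : Continuous (fun v : Fin d → ℝ => ∑ i, v i * e i) :=
    continuous_finset_sum _ fun i _ => (continuous_apply i).mul continuous_const
  have hlim : Tendsto (fun m => ∑ i, Df (paths m) t i * e i) atTop
      (nhds (∑ i, Df ω t i * e i)) := (hmap.tendsto _).comp hDf
  apply hlim.congr'
  filter_upwards [hxne] with m hm
  exact ((hξ m hm).2).symm

end Key
/-- If `f : D([0,T];ℝ^d) → ℝ` is pathwise Malliavin differentiable with
derivative `𝔻f`, and `f` and each `ω ↦ 𝔻_t f(ω)` are continuous with respect to the uniform
norm, then for every càdlàg `ω` and every simple step path `η = Σ_{k=1}^n e_k 1_{[t_k,T]}`,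
`lim_{ε→0} (f(ω + εη) − f(ω))/ε = Σ_{k=1}^n ⟨𝔻_{t_k} f(ω), e_k⟩`. -/
theorem statement_3 (T : ℝ) (hT : 0 < T) {d : ℕ}
    (f : (ℝ → Fin d → ℝ) → ℝ) (Df : (ℝ → Fin d → ℝ) → ℝ → Fin d → ℝ)
    (hdiff : HasPathwiseMalliavinDeriv T f Df)
    (hfcont : UnifContOnCadlag T f)
    (hDcont : ∀ t ∈ Set.Icc (0 : ℝ) T, UnifContOnCadlagVec T (fun ω => Df ω t))
    (ω : ℝ → Fin d → ℝ) (hω : CadlagOn T ω)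
    (n : ℕ) (e : Fin n → Fin d → ℝ) (tk : Fin n → ℝ)
    (htk : ∀ k, tk k ∈ Set.Icc (0 : ℝ) T) :
    Tendsto (fun ε : ℝ => (f (ω + ε • ∑ k, bump T (tk k) (e k)) - f ω) / ε)
      (nhdsWithin 0 {(0 : ℝ)}ᶜ)
      (nhds (∑ k, ∑ i, Df ω (tk k) i * e k i)) := by
  induction n with
  | zero =>
    have h0 : ∀ ε : ℝ, (f (ω + ε • ∑ k : Fin 0, bump T (tk k) (e k)) - f ω) / ε = 0 := by
      intro ε; simp
    rw [show (∑ k : Fin 0, ∑ i, Df ω (tk k) i * e k i) = 0 from by simp]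
    exact Tendsto.congr (fun ε => (h0 ε).symm) tendsto_const_nhds
  | succ n ih =>
    set P : ℝ → Fin d → ℝ := ∑ k : Fin n, bump T (tk k.castSucc) (e k.castSucc) with hPdef
    set b : ℝ → Fin d → ℝ := bump T (tk (Fin.last n)) (e (Fin.last n)) with hbdef
    have hPc : CadlagOn T P :=
      cadlagOn_sum _ _ (fun k _ => cadlagOn_bump _ _)
    have hPC : ∀ s ∈ Set.Icc (0 : ℝ) T, ‖P s‖ ≤ ∑ k : Fin n, ‖e k.castSucc‖ := by
      intro s _
      have hps : P s = ∑ k : Fin n, bump T (tk k.castSucc) (e k.castSucc) s := by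
        rw [hPdef]; exact Finset.sum_apply _ _ _
      rw [hps]
      exact le_trans (norm_sum_le _ _) (Finset.sum_le_sum fun k _ => bump_norm_le _ _ _)
    have h2 := key_tendsto hT hdiff hDcont hω hPc hPC (htk (Fin.last n)) (e (Fin.last n))
    have h1 := ih (fun k => e k.castSucc) (fun k => tk k.castSucc) (fun k => htk _)
    have hsum : (fun ε : ℝ => (f (ω + ε • ∑ k, bump T (tk k) (e k)) - f ω) / ε)
        = fun ε : ℝ => (f (ω + ε • P) - f ω) / ε
            + (f (ω + ε • P + ε • b) - f (ω + ε • P)) / ε := by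
      funext ε
      have hsplit : ω + ε • ∑ k : Fin (n + 1), bump T (tk k) (e k)
          = ω + ε • P + ε • b := by
        rw [Fin.sum_univ_castSucc, smul_add, ← add_assoc]
      rw [hsplit, ← add_div]
      congr 1
      ring
    rw [hsum, Fin.sum_univ_castSucc]
    exact h1.add h2
end
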